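/- Let X = [0,1]^d with the Euclidean norm and β ∈ (0,∞). Let the nested designs X_n be generated by the boundary-phobic greedy algorithm: x_1 ∈ X is arbitrary and, for each n ≥ 1, x_{n+1} ∈ Argmax_{x∈X} D_β(x, X_n, X) where D_β(x, X_n, X) = min{ min_{x_i∈X_n} ‖x − x_i‖, β·d(x, ∂X) }. Then for every n ≥ 1, min_{x_i∈X_n} ‖x_{n+1} − x_i‖ ≥ CR(X_n)/(1 + √d/β); i.e., the algorithm is an instance of the relaxed greedy-packing algorithm with constant α_n = a = 1/(1 + √d/β). -/

import Mathlib

open Metric Set MeasureTheory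

/-- Distance from a point `x` to the nearest point of the design `D`. -/
noncomputable def minDist {E : Type*} [NormedAddCommGroup E] (D : Finset E) (x : E) : ℝ :=
  sInf ((fun p => dist x p) '' (D : Set E))

/-- Fill distance (covering radius) of the design `D` for the set `A`:
`CR_A(D) = sup_{x ∈ A} min_{p ∈ D} ‖x - p‖`. -/
noncomputable def fillDist {E : Type*} [NormedAddCommGroup E] (A : Set E) (D : Finset E) : ℝ :=
  sSup ((fun x => minDist D x) '' A)

/-- Separation radius of the design `D`:
`SR(D) = (1/2) min_{p ≠ q ∈ D} ‖p - q‖`. -/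
noncomputable def sepRad {E : Type*} [NormedAddCommGroup E] (D : Finset E) : ℝ :=
  (1 / 2) * sInf ((fun p : E × E => dist p.1 p.2) '' {p | p.1 ∈ D ∧ p.2 ∈ D ∧ p.1 ≠ p.2})

/-- Mesh-ratio of the design `D` for the set `A`: `MR(D) = CR_A(D) / SR(D)`. -/
noncomputable def meshRatio {E : Type*} [NormedAddCommGroup E] (A : Set E) (D : Finset E) : ℝ :=
  fillDist A D / sepRad D

/-- The nested design consisting of the first `n` points of the sequence `x`. -/
noncomputable def design {E : Type*} (x : ℕ → E) (n : ℕ) : Finset E :=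
  letI := Classical.decEq E
  (Finset.range n).image x

section Aux
variable {d : ℕ}

local notation "E'" => EuclideanSpace ℝ (Fin d)

/-- The unit cube. -/
def Scube (d : ℕ) : Set (EuclideanSpace ℝ (Fin d)) :=
  {y | ∀ i, y i ∈ Set.Icc (0 : ℝ) 1}

lemma coord_le_dist (a b : E') (i : Fin d) : |a i - b i| ≤ dist a b := by
  rw [EuclideanSpace.dist_eq]
  have h1 : |a i - b i| = Real.sqrt (dist (a i) (b i) ^ 2) := by
    rw [Real.sqrt_sq dist_nonneg, Real.dist_eq]
  rw [h1]
  apply Real.sqrt_le_sqrt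
  exact Finset.single_le_sum (f := fun j => dist (a j) (b j) ^ 2)
    (fun j _ => sq_nonneg _) (Finset.mem_univ i)

lemma isClosed_Scube : IsClosed (Scube d) := by
  have h : Scube d = ⋂ i, (fun y : E' => y i) ⁻¹' Set.Icc (0:ℝ) 1 := by
    ext y; simp [Scube, Set.mem_iInter]
  rw [h]
  refine isClosed_iInter fun i => IsClosed.preimage ?_ isClosed_Icc
  have : LipschitzWith 1 (fun y : E' => y i) := by
    apply LipschitzWith.of_dist_le_mul
    intro a b
    rw [Real.dist_eq, NNReal.coe_one, one_mul]
    exact coord_le_dist a b i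
  exact this.continuous

lemma dist_update (w : E') (i : Fin d) (v : ℝ) :
    dist w (WithLp.toLp 2 (Function.update w.ofLp i v)) = |w i - v| := by
  rw [EuclideanSpace.dist_eq]
  rw [Finset.sum_eq_single i]
  · simp only [PiLp.toLp_apply, WithLp.ofLp_toLp]
    rw [Function.update_self, Real.dist_eq, Real.sqrt_sq (abs_nonneg _)]
  · intro j _ hj
    simp only [PiLp.toLp_apply, WithLp.ofLp_toLp]
    rw [Function.update_of_ne hj]
    simp
  · simp

lemma update_mem_frontier {w : E'} (hw : w ∈ Scube d) (i : Fin d) {v : ℝ}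
    (hv : v = 0 ∨ v = 1) : WithLp.toLp 2 (Function.update w.ofLp i v) ∈ frontier (Scube d) := by
  rw [isClosed_Scube.frontier_eq]
  constructor
  · intro j
    rcases eq_or_ne j i with rfl | hj
    · rw [PiLp.toLp_apply, Function.update_self]
      rcases hv with rfl | rfl <;> norm_num
    · rw [PiLp.toLp_apply, Function.update_of_ne hj]; exact hw j
  · intro hmem
    rw [mem_interior_iff_mem_nhds, Metric.mem_nhds_iff] at hmem
    obtain ⟨ε, hε, hball⟩ := hmem
    rcases hv with rfl | rfl
    · have hq : WithLp.toLp 2 (Function.update w.ofLp i (-(ε/2))) ∈ Scube d := by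
        apply hball
        rw [Metric.mem_ball]
        have : WithLp.toLp 2 (Function.update w.ofLp i (-(ε/2))) =
            WithLp.toLp 2 (Function.update (WithLp.toLp 2 (Function.update w.ofLp i 0) : E').ofLp i (-(ε/2))) := by
          simp [Function.update_idem]
        rw [this, dist_comm, dist_update]
        rw [PiLp.toLp_apply, Function.update_self]
        rw [show (0 : ℝ) - -(ε/2) = ε/2 by ring, abs_of_pos (by linarith)]
        linarith
      have := (hq i).1
      rw [PiLp.toLp_apply, Function.update_self] at this
      linarith
    · have hq : WithLp.toLp 2 (Function.update w.ofLp i (1 + ε/2)) ∈ Scube d := by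
        apply hball
        rw [Metric.mem_ball]
        have : WithLp.toLp 2 (Function.update w.ofLp i (1 + ε/2)) =
            WithLp.toLp 2 (Function.update (WithLp.toLp 2 (Function.update w.ofLp i 1) : E').ofLp i (1 + ε/2)) := by
          simp [Function.update_idem]
        rw [this, dist_comm, dist_update]
        rw [PiLp.toLp_apply, Function.update_self]
        rw [show (1 : ℝ) - (1 + ε/2) = -(ε/2) by ring, abs_neg,
          abs_of_pos (by linarith)]
        linarith
      have := (hq i).2
      rw [PiLp.toLp_apply, Function.update_self] at this
      linarith

lemma frontier_mem_char (hd : 1 ≤ d) {p : E'} (hp : p ∈ frontier (Scube d)) :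
    p ∈ Scube d ∧ ∃ j, p j = 0 ∨ p j = 1 := by
  rw [isClosed_Scube.frontier_eq] at hp
  obtain ⟨hpS, hpI⟩ := hp
  refine ⟨hpS, ?_⟩
  by_contra hcon
  push_neg at hcon
  apply hpI
  haveI : Nonempty (Fin d) := ⟨⟨0, hd⟩⟩
  have hne : (Finset.univ : Finset (Fin d)).Nonempty := Finset.univ_nonempty
  set ε := Finset.univ.inf' hne (fun j => min (p j) (1 - p j)) with hε
  have hεpos : 0 < ε := by
    rw [hε, Finset.lt_inf'_iff hne]
    intro j _
    have h0 := (hpS j).1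
    have h1 := (hpS j).2
    have hj0 := (hcon j).1
    have hj1 := (hcon j).2
    rw [lt_min_iff]
    constructor
    · cases' lt_or_eq_of_le h0 with h h
      · exact h
      · exact absurd h.symm hj0
    · cases' lt_or_eq_of_le h1 with h h
      · linarith
      · exact absurd h hj1
  rw [mem_interior]
  refine ⟨Metric.ball p ε, ?_, Metric.isOpen_ball, Metric.mem_ball_self hεpos⟩
  intro q hq
  rw [Metric.mem_ball] at hq
  intro j
  have hc : |q j - p j| ≤ dist q p := coord_le_dist q p j
  have hle : ε ≤ min (p j) (1 - p j) := Finset.inf'_le _ (Finset.mem_univ j)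
  have h1 : |q j - p j| < min (p j) (1 - p j) := lt_of_le_of_lt hc (lt_of_lt_of_le hq hle)
  have hm1 : |q j - p j| < p j := lt_of_lt_of_le h1 (min_le_left _ _)
  have hm2 : |q j - p j| < 1 - p j := lt_of_lt_of_le h1 (min_le_right _ _)
  have ha := neg_abs_le (q j - p j)
  have hb := le_abs_self (q j - p j)
  constructor
  · linarith
  · linarith

lemma le_infDist' {α : Type*} [PseudoMetricSpace α] {s : Set α} (hs : s.Nonempty) {x : α}
    {r : ℝ} (h : ∀ p ∈ s, r ≤ dist x p) : r ≤ infDist x s := by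
  by_contra hc
  rw [not_le] at hc
  obtain ⟨p, hp, hlt⟩ := (Metric.infDist_lt_iff hs).mp hc
  exact absurd (h p hp) (not_le.mpr hlt)

lemma frontier_Scube_nonempty (hd : 1 ≤ d) : (frontier (Scube d)).Nonempty := by
  have hc : (WithLp.toLp 2 (fun _ => (1:ℝ)/2) : EuclideanSpace ℝ (Fin d)) ∈ Scube d := by
    intro i; constructor <;> norm_num
  exact ⟨_, update_mem_frontier hc ⟨0, hd⟩ (Or.inl rfl)⟩

lemma infDist_frontier_ge (hd : 1 ≤ d) {r : ℝ} (hr : 0 ≤ r) {z : E'}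
    (hz : ∀ i, r ≤ z i ∧ r ≤ 1 - z i) : r ≤ infDist z (frontier (Scube d)) := by
  apply le_infDist' (frontier_Scube_nonempty hd)
  intro p hp
  obtain ⟨hpS, j, hj⟩ := frontier_mem_char hd hp
  refine le_trans ?_ (coord_le_dist z p j)
  rcases hj with h0 | h1
  · rw [h0, sub_zero]; exact le_trans (hz j).1 (le_abs_self _)
  · rw [h1]
    calc r ≤ 1 - z j := (hz j).2
    _ = -(z j - 1) := by ring
    _ ≤ |z j - 1| := neg_le_abs _

lemma minDist_nonneg' {E : Type*} [NormedAddCommGroup E] (D : Finset E) (z : E) :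
    0 ≤ minDist D z :=
  Real.sInf_nonneg (by rintro r ⟨p, _, rfl⟩; exact dist_nonneg)

lemma minDist_le' {E : Type*} [NormedAddCommGroup E] {D : Finset E} {p : E} (hp : p ∈ D)
    (z : E) : minDist D z ≤ dist z p :=
  csInf_le ⟨0, by rintro r ⟨q, _, rfl⟩; exact dist_nonneg⟩ ⟨p, by simpa using hp, rfl⟩

lemma le_minDist' {E : Type*} [NormedAddCommGroup E] {D : Finset E} (hD : D.Nonempty)
    {r : ℝ} {z : E} (h : ∀ p ∈ D, r ≤ dist z p) : r ≤ minDist D z := by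
  apply le_csInf
  · obtain ⟨p, hp⟩ := hD; exact ⟨dist z p, ⟨p, by simpa using hp, rfl⟩⟩
  · rintro b ⟨p, hp, rfl⟩; exact h p (by simpa using hp)

lemma minDist_lip {E : Type*} [NormedAddCommGroup E] {D : Finset E} (hD : D.Nonempty)
    (y z : E) : minDist D y ≤ minDist D z + dist y z := by
  have h : minDist D y - dist y z ≤ minDist D z := by
    apply le_minDist' hD
    intro p hp
    have h1 : minDist D y ≤ dist y p := minDist_le' hp y
    have h2 : dist y p ≤ dist y z + dist z p := dist_triangle _ _ _
    linarith
  linarith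

end Aux

/-- Let `S = [0,1]^d` with the Euclidean norm and `β ∈ (0,∞)`. If the
nested designs `Xₙ` are generated by the boundary-phobic greedy algorithm (the `(k+1)`-th
point `x k ∈ S` maximizes over `S` the criterion
`D_β(y) = min{min_{x_i ∈ X_k} ‖y − x_i‖, β·d(y, ∂S)}`), then for every `k ≥ 1`,
`min_{x_i ∈ X_k} ‖x_{k+1} − x_i‖ ≥ CR(X_k)/(1 + √d/β)`: the algorithm is an instance of the
relaxed greedy-packing algorithm with constant `α = a = 1/(1 + √d/β)`. -/
theorem statement14 {d : ℕ} (hd : 1 ≤ d) (β : ℝ) (hβ : 0 < β)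
    (S : Set (EuclideanSpace ℝ (Fin d)))
    (hScube : S = {y : EuclideanSpace ℝ (Fin d) | ∀ i, y i ∈ Set.Icc (0 : ℝ) 1})
    (x : ℕ → EuclideanSpace ℝ (Fin d)) (hinj : Function.Injective x) (hx0 : x 0 ∈ S)
    (hphobic : ∀ k : ℕ, 1 ≤ k → x k ∈ S ∧ ∀ y ∈ S,
      min (minDist (design x k) y) (β * Metric.infDist y (frontier S)) ≤
        min (minDist (design x k) (x k)) (β * Metric.infDist (x k) (frontier S))) :
    ∀ k : ℕ, 1 ≤ k →
      fillDist S (design x k) / (1 + Real.sqrt d / β) ≤ minDist (design x k) (x k) := by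
  have hS : S = Scube d := hScube
  subst hS
  intro k hk
  obtain ⟨hXS, hXmax⟩ := hphobic k hk
  have hx0D : x 0 ∈ design x k := by
    simp only [design, Finset.mem_image]
    exact ⟨0, Finset.mem_range.mpr hk, rfl⟩
  set D := design x k with hDdef
  have hDne : D.Nonempty := ⟨x 0, hx0D⟩
  set q := Real.sqrt (d : ℝ) with hqdef
  have hq0 : 0 ≤ q := Real.sqrt_nonneg _
  have hden : 0 < 1 + q / β := by positivity
  set m := minDist D (x k) with hmdef
  have hm0 : 0 ≤ m := minDist_nonneg' D (x k)
  rw [div_le_iff₀ hden]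
  unfold fillDist
  apply Real.sSup_le
  swap
  · positivity
  rintro v ⟨y, hyS, rfl⟩
  simp only
  -- goal : minDist D y ≤ m * (1 + q / β)
  by_cases hh : minDist D y ≤ 0
  · exact le_trans hh (by positivity)
  push_neg at hh
  haveI : Nonempty (Fin d) := ⟨⟨0, hd⟩⟩
  have hne : (Finset.univ : Finset (Fin d)).Nonempty := Finset.univ_nonempty
  set δ := Finset.univ.inf' hne (fun i => min (y i) (1 - y i)) with hδdef
  have hδi : ∀ i, δ ≤ min (y i) (1 - y i) := fun i => Finset.inf'_le _ (Finset.mem_univ i)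
  have hδ0 : 0 ≤ δ := by
    apply Finset.le_inf'
    intro i _
    have h0 := (hyS i).1
    have h1 := (hyS i).2
    rw [le_min_iff]
    exact ⟨h0, by linarith⟩
  set c : EuclideanSpace ℝ (Fin d) := WithLp.toLp 2 (fun _ => 1/2) with hcdef
  have hci : ∀ i, c i = 1/2 := fun i => rfl
  have hcS : c ∈ Scube d := by
    intro i
    rw [hci i]
    constructor <;> norm_num
  have hyci : ∀ i, |y i - c i| ≤ 1/2 - δ := by
    intro i
    have h := hδi i
    rw [le_min_iff] at h
    rw [hci i, abs_le]
    constructor <;> linarith [h.1, h.2]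
  have hδhalf : δ ≤ 1/2 := by
    obtain ⟨i⟩ := ‹Nonempty (Fin d)›
    have := abs_nonneg (y i - c i)
    linarith [hyci i]
  have hyc : dist y c ≤ q * (1/2 - δ) := by
    rw [EuclideanSpace.dist_eq]
    have hb : ∀ i ∈ Finset.univ, dist (y i) (c i) ^ 2 ≤ (1/2 - δ)^2 := by
      intro i _
      have h1 : dist (y i) (c i) ≤ 1/2 - δ := by
        rw [Real.dist_eq]; exact hyci i
      exact pow_le_pow_left₀ dist_nonneg h1 2
    calc Real.sqrt (∑ i, dist (y i) (c i) ^ 2)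
        ≤ Real.sqrt (∑ _i : Fin d, (1/2 - δ)^2) :=
          Real.sqrt_le_sqrt (Finset.sum_le_sum hb)
      _ = Real.sqrt ((d : ℝ) * (1/2 - δ)^2) := by
          rw [Finset.sum_const, Finset.card_univ, Fintype.card_fin, nsmul_eq_mul]
      _ = q * (1/2 - δ) := by
          rw [Real.sqrt_mul (by positivity), Real.sqrt_sq (by linarith)]
  have hβq : 0 < β + q := by linarith
  set s := minDist D y / (β + q) with hsdef
  have hs0 : 0 < s := div_pos hh hβq
  have hqs : minDist D y = s * (β + q) := (div_mul_cancel₀ _ (ne_of_gt hβq)).symm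
  have hfinal : β * s ≤ m → minDist D y ≤ m * (1 + q / β) := by
    intro hbs
    have h1 : β * s * (1 + q / β) ≤ m * (1 + q / β) :=
      mul_le_mul_of_nonneg_right hbs (le_of_lt hden)
    have h2 : β * s * (1 + q / β) = s * (β + q) := by
      field_simp
    linarith [hqs]
  by_cases hcase : s ≤ 1/2 - δ
  · -- move y towards the center
    have hδlt : δ < 1/2 := by linarith
    set t := s / (1/2 - δ) with htdef
    have ht0 : 0 ≤ t := le_of_lt (div_pos hs0 (by linarith))
    have ht1 : t ≤ 1 := (div_le_one (by linarith)).mpr hcase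
    have hts : t * (1/2 - δ) = s := div_mul_cancel₀ _ (by intro h; exact absurd h (by intro h'; linarith) )
    set z : EuclideanSpace ℝ (Fin d) := y + t • (c - y) with hzdef
    have hzi : ∀ i, z i = y i + t * (1/2 - y i) := by
      intro i
      have : z i = y i + t * (c i - y i) := rfl
      rw [this, hci i]
    have hziB : ∀ i, δ + s ≤ z i ∧ δ + s ≤ 1 - z i := by
      intro i
      have h := hδi i
      rw [le_min_iff] at h
      rw [hzi i]
      constructor
      · nlinarith [h.1, h.2]
      · nlinarith [h.1, h.2]
    have hzS : z ∈ Scube d := by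
      intro i
      have h := hziB i
      exact ⟨by linarith [h.1], by linarith [h.2]⟩
    have hdzy : dist z y ≤ q * s := by
      have h1 : dist z y = t * dist c y := by
        rw [dist_eq_norm, hzdef, add_sub_cancel_left, norm_smul,
          Real.norm_eq_abs, abs_of_nonneg ht0, dist_eq_norm]
      rw [h1, dist_comm]
      calc t * dist y c ≤ t * (q * (1/2 - δ)) := mul_le_mul_of_nonneg_left hyc ht0
        _ = q * (t * (1/2 - δ)) := by ring
        _ = q * s := by rw [hts]
    have hmDz : β * s ≤ minDist D z := by
      have hlip : minDist D y ≤ minDist D z + dist y z := minDist_lip hDne y z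
      rw [dist_comm y z] at hlip
      have hexp : s * (β + q) = β * s + q * s := by ring
      linarith [hdzy, hqs, hexp]
    have hbz : β * s ≤ β * infDist z (frontier (Scube d)) := by
      have h1 : δ + s ≤ infDist z (frontier (Scube d)) :=
        infDist_frontier_ge hd (by linarith) hziB
      have h2 : s ≤ infDist z (frontier (Scube d)) := by linarith
      exact mul_le_mul_of_nonneg_left h2 (le_of_lt hβ)
    have hmax := hXmax z hzS
    have h3 : β * s ≤ min (minDist D z) (β * infDist z (frontier (Scube d))) :=
      le_min hmDz hbz
    exact hfinal (le_trans (le_trans h3 hmax) (min_le_left _ _))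
  · push_neg at hcase
    have hcB : ∀ i : Fin d, (1:ℝ)/2 ≤ c i ∧ (1:ℝ)/2 ≤ 1 - c i := by
      intro i; rw [hci i]; norm_num
    have hIc : (1:ℝ)/2 ≤ infDist c (frontier (Scube d)) :=
      infDist_frontier_ge hd (by norm_num) hcB
    have hmDc : β * s ≤ minDist D c := by
      have hlip : minDist D y ≤ minDist D c + dist y c := minDist_lip hDne y c
      have h3 : q * (1/2 - δ) ≤ q * s := mul_le_mul_of_nonneg_left (le_of_lt hcase) hq0
      have hexp : s * (β + q) = β * s + q * s := by ring
      linarith [hyc, hqs, hexp]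
    have hmax := hXmax c hcS
    by_cases hs2 : s ≤ 1/2
    · have hbz : β * s ≤ β * infDist c (frontier (Scube d)) :=
        mul_le_mul_of_nonneg_left (le_trans hs2 hIc) (le_of_lt hβ)
      exact hfinal (le_trans (le_trans (le_min hmDc hbz) hmax) (min_le_left _ _))
    · push_neg at hs2
      have hβ2 : β * (1/2) ≤ min (minDist D c) (β * infDist c (frontier (Scube d))) := by
        apply le_min
        · exact le_trans (mul_le_mul_of_nonneg_left (le_of_lt hs2) (le_of_lt hβ)) hmDc
        · exact mul_le_mul_of_nonneg_left hIc (le_of_lt hβ)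
      have h4 := le_trans hβ2 hmax
      have hIX : (1:ℝ)/2 ≤ infDist (x k) (frontier (Scube d)) := by
        have h5 := le_trans h4 (min_le_right _ _)
        exact le_of_mul_le_mul_left h5 hβ
      have hXi : ∀ i, x k i = 1/2 := by
        intro i
        have hu0 : infDist (x k) (frontier (Scube d)) ≤ x k i := by
          have hf := update_mem_frontier hXS i (Or.inl rfl)
          have h6 := infDist_le_dist_of_mem (x := x k) hf
          rw [dist_update, sub_zero, abs_of_nonneg (hXS i).1] at h6
          exact h6
        have hu1 : infDist (x k) (frontier (Scube d)) ≤ 1 - x k i := by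
          have hf := update_mem_frontier hXS i (Or.inr rfl)
          have h6 := infDist_le_dist_of_mem (x := x k) hf
          rw [dist_update, show x k i - 1 = -(1 - x k i) by ring, abs_neg,
            abs_of_nonneg (by linarith [(hXS i).2])] at h6
          exact h6
        linarith
      have hXc : x k = c := by
        ext i
        rw [hXi i, hci i]
      have h2 : β * s ≤ m := by
        rw [hmdef, hXc]
        exact hmDc
      exact hfinal h2
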